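/- (Degeneration Lemma) If x ⊑ y in the Bayesian order on Δⁿ, then for all indices i, j: (a) xᵢ = 0 implies yᵢ = 0, and (b) yᵢ = yⱼ > 0 implies xᵢ = xⱼ. -/

import Mathlib

open Finset

/-- Δⁿ: probability distributions on {1,…,n}. -/
def IsDist {n : ℕ} (x : Fin n → ℝ) : Prop :=
  (∀ i, 0 ≤ x i) ∧ ∑ i, x i = 1

/-- The adjacent-index inequalities  xᵢ yᵢ₊₁ ≤ xᵢ₊₁ yᵢ  for all i ∈ {1,…,n-1}. -/
def AdjLE {n : ℕ} (x y : Fin n → ℝ) : Prop :=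
  ∀ i : ℕ, ∀ h : i + 1 < n,
    x ⟨i, Nat.lt_of_succ_lt h⟩ * y ⟨i + 1, h⟩ ≤ x ⟨i + 1, h⟩ * y ⟨i, Nat.lt_of_succ_lt h⟩

/-- The Bayesian order on Δⁿ: x ⊑ y iff some permutation σ monotonizes both
(x∘σ, y∘σ decreasing, i.e. in Λⁿ) and the adjacent inequalities hold. -/
def BayesLE {n : ℕ} (x y : Fin n → ℝ) : Prop :=
  ∃ σ : Equiv.Perm (Fin n),
    Antitone (x ∘ σ) ∧ Antitone (y ∘ σ) ∧ AdjLE (x ∘ σ) (y ∘ σ)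

/-- Zeroes propagate along the monotonized chain. -/
lemma aux_zero {n : ℕ} (u v : Fin n → ℝ) (hu : Antitone u) (hv : Antitone v)
    (hun : ∀ i, 0 ≤ u i) (hvn : ∀ i, 0 ≤ v i) (hsum : ∑ i, u i = 1)
    (hadj : AdjLE u v) :
    ∀ m : ℕ, ∀ h : m < n, u ⟨m, h⟩ = 0 → v ⟨m, h⟩ = 0 := by
  intro m
  induction m with
  | zero =>
    intro h h0
    exfalso
    have hall : ∀ j ∈ Finset.univ, u j = (0 : ℝ) := by
      intro j _
      have hle : u j ≤ u ⟨0, h⟩ := hu (by simp [Fin.le_def])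
      have := hun j
      linarith [h0 ▸ hle]
    have : (1 : ℝ) = 0 := by
      rw [← hsum]; exact Finset.sum_eq_zero hall
    norm_num at this
  | succ m ih =>
    intro h h0
    have hm : m < n := Nat.lt_of_succ_lt h
    rcases eq_or_lt_of_le (hun ⟨m, hm⟩) with he | hp
    · -- u m = 0, so v m = 0 by IH, and v antitone nonneg gives v (m+1) = 0
      have hvm : v ⟨m, hm⟩ = 0 := ih hm he.symm
      have hle : v ⟨m + 1, h⟩ ≤ v ⟨m, hm⟩ := hv (by simp [Fin.le_def])
      have := hvn ⟨m + 1, h⟩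
      linarith
    · -- u m > 0 ; adjacency gives u m * v (m+1) ≤ u (m+1) * v m = 0
      have hadjm := hadj m h
      rw [h0, zero_mul] at hadjm
      have := hvn ⟨m + 1, h⟩
      nlinarith

/-- Equal positive values of v force equal values of u along the chain. -/
lemma aux_eq {n : ℕ} (u v : Fin n → ℝ) (hu : Antitone u) (hv : Antitone v)
    (hadj : AdjLE u v) :
    ∀ k : ℕ, ∀ i : Fin n, ∀ h : i.val + k < n,
      v i = v ⟨i.val + k, h⟩ → 0 < v i → u i = u ⟨i.val + k, h⟩ := by
  intro k
  induction k with
  | zero =>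
    intro i h _ _
    congr 1
  | succ k ih =>
    intro i h hveq hvpos
    have hk : i.val + k < n := Nat.lt_of_succ_lt (by omega)
    have h1 : i.val + k + 1 < n := by omega
    -- v is constant on the interval
    have hv1 : v ⟨i.val + k, hk⟩ = v i := by
      have h1le : v ⟨i.val + k, hk⟩ ≤ v i := hv (by simp [Fin.le_def])
      have h2le : v ⟨i.val + k + 1, h1⟩ ≤ v ⟨i.val + k, hk⟩ := hv (by simp [Fin.le_def])
      have : v i = v ⟨i.val + k + 1, h1⟩ := by
        convert hveq using 3
        omega
      linarith [this ▸ h2le]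
    have hIH : u i = u ⟨i.val + k, hk⟩ := ih i hk hv1.symm hvpos
    -- adjacency at i.val + k
    have hadjk := hadj (i.val + k) h1
    have hveq' : v ⟨i.val + k + 1, h1⟩ = v ⟨i.val + k, hk⟩ := by
      rw [hv1]
      convert hveq.symm using 3
      omega
    rw [hveq'] at hadjk
    have hvkpos : 0 < v ⟨i.val + k, hk⟩ := hv1 ▸ hvpos
    have hle : u ⟨i.val + k, hk⟩ ≤ u ⟨i.val + k + 1, h1⟩ :=
      le_of_mul_le_mul_right hadjk hvkpos
    have hge : u ⟨i.val + k + 1, h1⟩ ≤ u ⟨i.val + k, hk⟩ := hu (by simp [Fin.le_def])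
    have : u ⟨i.val + k, hk⟩ = u ⟨i.val + k + 1, h1⟩ := le_antisymm hle hge
    rw [hIH, this]
    congr 1

/-- Degeneration Lemma: if x ⊑ y then zeroes of x are zeroes of y,
and a strictly positive degeneracy of y is a degeneracy of x. -/
theorem stmt7 {n : ℕ} (x y : Fin n → ℝ) (hx : IsDist x) (hy : IsDist y)
    (hxy : BayesLE x y) :
    (∀ i, x i = 0 → y i = 0) ∧
    (∀ i j, y i = y j → 0 < y i → x i = x j) := by
  obtain ⟨σ, hu, hv, hadj⟩ := hxy
  set u := x ∘ σ with hudef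
  set v := y ∘ σ with hvdef
  have hun : ∀ i, 0 ≤ u i := fun i => hx.1 (σ i)
  have hvn : ∀ i, 0 ≤ v i := fun i => hy.1 (σ i)
  have hsum : ∑ i, u i = 1 := by
    rw [hudef]
    rw [show ∑ i, (x ∘ σ) i = ∑ i, x (σ i) from rfl, Equiv.sum_comp σ x]
    exact hx.2
  have hux : ∀ i, u (σ.symm i) = x i := fun i => by simp [hudef]
  have hvy : ∀ i, v (σ.symm i) = y i := fun i => by simp [hvdef]
  constructor
  · intro i hxi
    have h0 : u (σ.symm i) = 0 := by rw [hux]; exact hxi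
    have := aux_zero u v hu hv hun hvn hsum hadj (σ.symm i).val (σ.symm i).isLt
      (by simpa using h0)
    rw [← hvy i]
    simpa using this
  · intro i j hyij hypos
    -- reduce to statement about u, v at a := σ.symm i, b := σ.symm j
    have key : ∀ a b : Fin n, a ≤ b → v a = v b → 0 < v a → u a = u b := by
      intro a b hab hveq hvp
      have hk : a.val + (b.val - a.val) < n := by
        have := b.isLt; omega
      have hab' : a.val ≤ b.val := hab
      have hb : b = ⟨a.val + (b.val - a.val), hk⟩ := by
        ext; simp only [Fin.val_mk]; omega
      rw [hb] at hveq ⊢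
      exact aux_eq u v hu hv hadj (b.val - a.val) a hk hveq hvp
    set a := σ.symm i
    set b := σ.symm j
    have hva : v a = y i := hvy i
    have hvb : v b = y j := hvy j
    have hveq : v a = v b := by rw [hva, hvb, hyij]
    rcases le_total a b with hab | hba
    · have := key a b hab hveq (by rw [hva]; exact hypos)
      rw [← hux i, ← hux j]
      exact this
    · have := key b a hba hveq.symm (by rw [hvb, ← hyij]; exact hypos)
      rw [← hux i, ← hux j]
      exact this.symm
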